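/- Let q be a quaternion. Then the quaternion α * q * (star β) − β * q * (star α) is real (has vanishing imaginary part) for all quaternions α, β if and only if Re q = 0. -/

import Mathlib

/-- For a quaternion `q`, the quaternion `α q β̄ − β q ᾱ` is real (has vanishing
imaginary part) for all quaternions `α, β` if and only if `Re q = 0`.  This is the
algebraic core of the equivalence of `Im(dx ∧ θ ∧ dx̄) = 0` with `Re θ = 0`. -/
theorem real_for_all_conj_iff_re_eq_zero (q : Quaternion ℝ) :
    (∀ α β : Quaternion ℝ, (α * q * star β - β * q * star α).im = 0) ↔ q.re = 0 := by
  constructor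
  · intro h
    obtain ⟨e, he1, he2, he3, he4⟩ : ∃ e : Quaternion ℝ, e.re = 0 ∧ e.imI = 1 ∧ e.imJ = 0 ∧ e.imK = 0 :=
      ⟨⟨0, 1, 0, 0⟩, rfl, rfl, rfl, rfl⟩
    have h1 := h 1 e
    have h2 := congrArg QuaternionAlgebra.imI h1
    simp [Quaternion.imI_mul, Quaternion.imI_star, Quaternion.imJ_star,
      Quaternion.imK_star, Quaternion.re_star, Quaternion.imI_zero, he1, he2, he3, he4] at h2
    linarith
  · intro h α β
    ext <;>
      simp [Quaternion.re_mul, Quaternion.imI_mul, Quaternion.imJ_mul,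
        Quaternion.imK_mul, Quaternion.re_star, Quaternion.imI_star, Quaternion.imJ_star,
        Quaternion.imK_star, h, Quaternion.re_zero, Quaternion.imI_zero, Quaternion.imJ_zero, Quaternion.imK_zero] <;> ring
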